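/- There does not exist a non-constant Lipschitz function h : S¹ → ℝ with the property that for every ε > 0, all pairs t₁ ≠ t₂ with d(t₁,t₂) < ε and h(t₁) = h(t₂) found in a fixed full-measure set B generate, via the irrational rotation closure argument, periods of h. Equivalently (Proposition 4.1 of the paper): if α is irrational, h : S¹ → ℝ is Lipschitz, and for ν = h_* Leb almost every y ∈ ℝ the conditional measures of Leb with respect to h make h ∘ R_α constant almost surely, then h is constant. -/

import Mathlib

open MeasureTheory Filter

section Aux

/-- The projection `ℝ → UnitAddCircle` is `1`-Lipschitz. -/
lemma aux_lipschitz_coe : LipschitzWith 1 (fun x : ℝ => (x : UnitAddCircle)) := by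
  refine LipschitzWith.of_dist_le_mul fun x y => ?_
  simp only [NNReal.coe_one, one_mul, ENNReal.coe_one]
  rw [dist_eq_norm, dist_eq_norm, ← AddCircle.coe_sub]
  exact QuotientAddGroup.norm_mk_le_norm

/-- A Lipschitz function maps null sets of the circle to null sets of `ℝ`. -/
lemma aux_image_null {K : NNReal} {h : UnitAddCircle → ℝ} (hLip : LipschitzWith K h)
    {s : Set UnitAddCircle} (hs : MeasurableSet s) (h0 : volume s = 0) :
    volume (h '' s) = 0 := by
  have hLipH : LipschitzWith (K * 1) (fun x : ℝ => h (x : UnitAddCircle)) :=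
    hLip.comp aux_lipschitz_coe
  set H : ℝ → ℝ := fun x => h (x : UnitAddCircle) with hH
  set s₀ : Set ℝ := ((fun x : ℝ => (x : UnitAddCircle)) ⁻¹' s) ∩ Set.Ioc 0 1 with hs₀
  have hpre : MeasurableSet ((fun x : ℝ => (x : UnitAddCircle)) ⁻¹' s) :=
    hs.preimage (AddCircle.measurable_mk')
  have hs₀null : volume s₀ = 0 := by
    have hmp := (AddCircle.measurePreserving_mk 1 0).measure_preimage hs.nullMeasurableSet
    rw [Measure.restrict_apply hpre] at hmp
    rw [hs₀]
    rw [zero_add] at hmp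
    rw [hmp, h0]
  have hsub : h '' s ⊆ H '' s₀ := by
    rintro _ ⟨t, hts, rfl⟩
    obtain ⟨b, hb, hbe⟩ := AddCircle.eq_coe_Ico t
    by_cases hb0 : b = 0
    · refine ⟨1, ⟨?_, by norm_num⟩, ?_⟩
      · show ((1 : ℝ) : UnitAddCircle) ∈ s
        have h10 : ((1 : ℝ) : UnitAddCircle) = ((0 : ℝ) : UnitAddCircle) := by
          rw [AddCircle.coe_period]; exact (QuotientAddGroup.mk_zero _).symm
        rw [h10]
        have : ((0 : ℝ) : UnitAddCircle) = t := by rw [← hbe, hb0]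
        rwa [this]
      · show h _ = h t
        have h10 : ((1 : ℝ) : UnitAddCircle) = ((0 : ℝ) : UnitAddCircle) := by
          rw [AddCircle.coe_period]; exact (QuotientAddGroup.mk_zero _).symm
        rw [h10]
        have : ((0 : ℝ) : UnitAddCircle) = t := by rw [← hbe, hb0]
        rw [this]
    · refine ⟨b, ⟨?_, ?_⟩, ?_⟩
      · show (b : UnitAddCircle) ∈ s
        rwa [hbe]
      · exact ⟨lt_of_le_of_ne hb.1 (Ne.symm hb0), le_of_lt hb.2⟩
      · show h _ = h t
        rw [hbe]
  refine measure_mono_null hsub ?_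
  have himg := hLipH.hausdorffMeasure_image_le zero_le_one s₀
  rw [MeasureTheory.hausdorffMeasure_real] at himg
  refine le_antisymm (le_trans himg ?_) zero_le
  rw [hs₀null, mul_zero]

/-- The forward orbit of an irrational rotation is dense. -/
lemma aux_dense_orbit {α : ℝ} (hα : Irrational α) (t : UnitAddCircle) :
    Dense (Set.range fun n : ℕ => t + n • ((α : ℝ) : UnitAddCircle)) := by
  set β : UnitAddCircle := ((α : ℝ) : UnitAddCircle) with hβ
  have hz : DenseRange (fun n : ℤ => n • β) := by
    rcases AddSubgroup.dense_or_cyclic (AddSubgroup.closure {α, 1}) with hd | ⟨a, ha⟩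
    · have hsurj : DenseRange (fun x : ℝ => (x : UnitAddCircle)) := by
        refine Function.Surjective.denseRange fun t => ?_
        obtain ⟨b, _, hb⟩ := AddCircle.eq_coe_Ico t
        exact ⟨b, hb⟩
      have himg : Dense ((fun x : ℝ => (x : UnitAddCircle)) ''
          ((AddSubgroup.closure {α, 1} : AddSubgroup ℝ) : Set ℝ)) :=
        hsurj.dense_image continuous_quotient_mk' hd
      refine himg.mono ?_
      rintro _ ⟨x, hx, rfl⟩
      induction hx using AddSubgroup.closure_induction with
      | mem z hz =>
        rcases hz with hz | hz
        · exact ⟨1, by simp [hβ, hz]⟩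
        · refine ⟨0, ?_⟩
          simp only [zero_smul]
          rw [hz, AddCircle.coe_period]
      | zero => exact ⟨0, by simp⟩
      | add x y _ _ hx hy =>
        obtain ⟨n, hn⟩ := hx; obtain ⟨m, hm⟩ := hy
        have hn' : n • β = ((x : ℝ) : UnitAddCircle) := hn
        have hm' : m • β = ((y : ℝ) : UnitAddCircle) := hm
        refine ⟨n + m, ?_⟩
        show (n + m) • β = ((x + y : ℝ) : UnitAddCircle)
        rw [AddCircle.coe_add, ← hn', ← hm', add_zsmul]
      | neg x _ hx =>
        obtain ⟨n, hn⟩ := hx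
        have hn' : n • β = ((x : ℝ) : UnitAddCircle) := hn
        refine ⟨-n, ?_⟩
        show (-n) • β = ((-x : ℝ) : UnitAddCircle)
        rw [AddCircle.coe_neg, ← hn', neg_zsmul]
    · exfalso
      rw [← AddSubgroup.zmultiples_eq_closure] at ha
      have hαmem : α ∈ AddSubgroup.closure ({α, 1} : Set ℝ) :=
        AddSubgroup.subset_closure (by simp)
      have h1mem : (1 : ℝ) ∈ AddSubgroup.closure ({α, 1} : Set ℝ) :=
        AddSubgroup.subset_closure (by simp)
      rw [ha] at hαmem h1mem
      obtain ⟨m, hm⟩ := AddSubgroup.mem_zmultiples_iff.mp hαmem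
      obtain ⟨n, hn⟩ := AddSubgroup.mem_zmultiples_iff.mp h1mem
      rw [zsmul_eq_mul] at hm hn
      have hn0 : (n : ℝ) ≠ 0 := by
        intro hc
        rw [hc, zero_mul] at hn
        exact one_ne_zero hn.symm
      refine hα ⟨(m : ℚ) / (n : ℚ), ?_⟩
      have hnq : ((n : ℚ) : ℝ) ≠ 0 := by push_cast; exact hn0
      rw [Rat.cast_div]
      push_cast
      rw [div_eq_iff hn0, ← hm]
      rw [mul_comm ((n:ℝ)) a] at hn
      rw [mul_assoc, hn, mul_one]
  have hns : DenseRange (fun n : ℕ => n • β) := denseRange_zsmul_iff_nsmul.mp hz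
  have htrans : Dense ((fun x => t + x) '' Set.range fun n : ℕ => n • β) :=
    (Homeomorph.addLeft t).isDenseEmbedding.toIsDenseInducing.dense_image.mpr hns
  refine htrans.mono ?_
  rintro _ ⟨_, ⟨n, rfl⟩, rfl⟩
  exact ⟨n, rfl⟩

end Aux

set_option maxHeartbeats 1600000 in
/-- Proposition 4.1: If `α` is irrational, `h : S¹ → ℝ` is Lipschitz, and for
`ν = h_* Leb`-a.e. `y` the conditional measure `μ_y` of Lebesgue measure with respect to `h`
makes `h ∘ R_α` almost surely constant, then `h` is constant. The conditional measures are
given as a disintegration of Lebesgue measure over the pushforward `ν`. -/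
theorem stmt_3 (α : ℝ) (hα : Irrational α) (h : UnitAddCircle → ℝ) (K : NNReal)
    (hLip : LipschitzWith K h) (μy : ℝ → Measure UnitAddCircle)
    (hmeas : ∀ A : Set UnitAddCircle, MeasurableSet A → Measurable fun y => μy y A)
    (hprob : ∀ᵐ y ∂(Measure.map h volume), IsProbabilityMeasure (μy y))
    (hfiber : ∀ᵐ y ∂(Measure.map h volume), ∀ᵐ t ∂(μy y), h t = y)
    (hdis : ∀ A : Set UnitAddCircle, MeasurableSet A →
      volume A = ∫⁻ y, μy y A ∂(Measure.map h volume))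
    (hconst : ∀ᵐ y ∂(Measure.map h volume),
      ∃ c : ℝ, ∀ᵐ t ∂(μy y), h (t + ((α : ℝ) : UnitAddCircle)) = c) :
    ∃ c : ℝ, ∀ t, h t = c := by
  classical
  by_contra hcon
  push_neg at hcon
  obtain ⟨t₀, ht₀⟩ := hcon (h 0)
  set β : UnitAddCircle := ((α : ℝ) : UnitAddCircle) with hβ
  set ν : Measure ℝ := Measure.map h volume with hν
  -- a measurable Markov modification of the conditional measures
  set T : Set ℝ := {y | μy y Set.univ = 1} with hT
  have hTmeas : MeasurableSet T := (hmeas _ MeasurableSet.univ) (measurableSet_singleton 1)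
  set m : ℝ → Measure UnitAddCircle := T.piecewise μy (fun _ => Measure.dirac 0) with hm
  have hmMeas : Measurable m :=
    Measurable.piecewise hTmeas (Measure.measurable_of_measurable_coe μy hmeas) measurable_const
  have hmProb : ∀ y, IsProbabilityMeasure (m y) := by
    intro y
    by_cases hy : y ∈ T
    · rw [hm, Set.piecewise_eq_of_mem _ _ _ hy]; exact ⟨hy⟩
    · rw [hm, Set.piecewise_eq_of_notMem _ _ _ hy]; infer_instance
  set κ : ProbabilityTheory.Kernel ℝ UnitAddCircle := ⟨m, hmMeas⟩ with hκ
  haveI : ProbabilityTheory.IsMarkovKernel κ := ⟨hmProb⟩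
  -- the factor map ψ with h ∘ R_α = ψ ∘ h almost everywhere
  set ψ : ℝ → ℝ := fun y => ∫ t, h (t + β) ∂(κ y) with hψ
  have hcont_hβ : Continuous fun t : UnitAddCircle => h (t + β) :=
    hLip.continuous.comp (continuous_id.add continuous_const)
  have hψm : Measurable ψ := by
    have hsm : StronglyMeasurable (Function.uncurry fun (_ : ℝ) (t : UnitAddCircle) => h (t + β)) :=
      (hcont_hβ.comp continuous_snd).stronglyMeasurable
    exact (MeasureTheory.StronglyMeasurable.integral_kernel_prod_right (κ := κ) hsm).measurable
  have haem : ∀ᵐ y ∂ν, m y = μy y := by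
    refine hprob.mono fun y hy => ?_
    have : y ∈ T := hy.measure_univ
    rw [hm, Set.piecewise_eq_of_mem _ _ _ this]
  set E : Set UnitAddCircle := {t | h (t + β) = ψ (h t)} with hE
  have hEmeas : MeasurableSet E :=
    measurableSet_eq_fun hcont_hβ.measurable (hψm.comp hLip.continuous.measurable)
  have key : ∀ᵐ y ∂ν, μy y Eᶜ = 0 := by
    filter_upwards [hprob, hfiber, hconst, haem] with y h1 h2 h3 h4
    obtain ⟨c, hc⟩ := h3
    have hκy : κ y = μy y := h4
    have hψy : ψ y = c := by
      rw [hψ]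
      show ∫ t, h (t + β) ∂(κ y) = c
      rw [hκy]
      rw [integral_congr_ae (hc.mono fun t ht => ht)]
      haveI := h1
      simp
    have hae : ∀ᵐ t ∂μy y, t ∈ E := by
      filter_upwards [hc, h2] with t ht1 ht2
      show h (t + β) = ψ (h t)
      rw [ht2, hψy, ht1]
    exact ae_iff.mp hae
  have hEc : volume Eᶜ = 0 := by
    have hz : ∫⁻ y, μy y Eᶜ ∂ν = ∫⁻ _, 0 ∂ν :=
      lintegral_congr_ae (key.mono fun y hy => hy)
    rw [hdis Eᶜ hEmeas.compl, hz, lintegral_zero]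
  -- the full measure set F on which all iterates are controlled
  set F : Set UnitAddCircle := ⋂ n : ℕ, (fun t => t + n • β) ⁻¹' E with hF
  have hFmeas : MeasurableSet F := by
    refine MeasurableSet.iInter fun n => hEmeas.preimage ?_
    exact measurable_id.add_const _
  have hFc : volume Fᶜ = 0 := by
    rw [hF, Set.compl_iInter]
    refine measure_iUnion_null fun n => ?_
    rw [← Set.preimage_compl]
    rw [(measurePreserving_add_right volume (n • β)).measure_preimage
      hEmeas.compl.nullMeasurableSet]
    exact hEc
  have hFiter : ∀ t ∈ F, ∀ n : ℕ, h (t + n • β) = ψ^[n] (h t) := by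
    intro t ht n
    induction n with
    | zero => simp
    | succ n ih =>
      have h1 : t + n • β ∈ E := Set.mem_iInter.mp ht n
      have h2 : t + (n + 1) • β = (t + n • β) + β := by rw [succ_nsmul]; abel
      rw [h2, h1, ih, ← Function.iterate_succ_apply' ψ n (h t)]
  -- equal values on F propagate to a global period
  have hC : ∀ t s : UnitAddCircle, t ∈ F → s ∈ F → h t = h s →
      ∀ x, h (x + (s - t)) = h x := by
    intro t s htF hsF hts
    have hD : IsClosed {x : UnitAddCircle | h (x + (s - t)) = h x} :=
      isClosed_eq (hLip.continuous.comp (continuous_id.add continuous_const)) hLip.continuous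
    have hsub : (Set.range fun n : ℕ => t + n • β) ⊆ {x | h (x + (s - t)) = h x} := by
      rintro _ ⟨n, rfl⟩
      show h ((t + n • β) + (s - t)) = h (t + n • β)
      have harr : (t + n • β) + (s - t) = s + n • β := by abel
      rw [harr, hFiter s hsF n, hFiter t htF n, hts]
    have hdense : Dense {x : UnitAddCircle | h (x + (s - t)) = h x} :=
      (aux_dense_orbit hα t).mono hsub
    have huniv : {x : UnitAddCircle | h (x + (s - t)) = h x} = Set.univ := by
      rw [← hD.closure_eq]
      exact hdense.closure_eq
    intro x
    exact (Set.eq_univ_iff_forall.mp huniv) x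
  -- pass to the real line
  set H : ℝ → ℝ := fun x => h (x : UnitAddCircle) with hH
  have hHcont : Continuous H := hLip.continuous.comp continuous_quotient_mk'
  obtain ⟨x₀, _, hx₀⟩ := AddCircle.eq_coe_Ico t₀
  have hH0 : H 0 = h 0 := by
    show h _ = h 0
    rw [QuotientAddGroup.mk_zero]
  have hHne : H x₀ ≠ H 0 := by
    have e1 : H x₀ = h t₀ := by show h _ = h t₀; rw [hx₀]
    rw [e1, hH0]; exact ht₀
  -- the subgroup of periods of H
  set S : AddSubgroup ℝ :=
    { carrier := {d | ∀ x : ℝ, H (x + d) = H x}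
      zero_mem' := by intro x; rw [add_zero]
      add_mem' := by
        intro d e hd he x
        rw [← add_assoc, he (x + d)]
        exact hd x
      neg_mem' := by
        intro d hd x
        have := hd (x + -d)
        rw [add_assoc, neg_add_cancel, add_zero] at this
        exact this.symm } with hS
  have hSper : ∀ d ∈ S, ∀ x : ℝ, H (x + d) = H x := fun d hd => hd
  have h1S : (1 : ℝ) ∈ S := by
    intro x
    show h _ = h _
    rw [AddCircle.coe_add, AddCircle.coe_period, add_zero]
  have hSclosed : IsClosed (S : Set ℝ) := by
    have : (S : Set ℝ) = ⋂ x : ℝ, {d | H (x + d) = H x} := by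
      ext d; simp [hS, Set.mem_iInter]
    rw [this]
    exact isClosed_iInter fun x =>
      isClosed_eq (hHcont.comp (continuous_const.add continuous_id)) continuous_const
  rcases AddSubgroup.dense_or_cyclic S with hdense | ⟨a, ha⟩
  · -- dense period group: H constant, contradiction
    have : (S : Set ℝ) = Set.univ := by
      rw [← hSclosed.closure_eq]
      exact hdense.closure_eq
    have hall : ∀ d : ℝ, H d = H 0 := by
      intro d
      have hd : d ∈ S := by rw [← SetLike.mem_coe, this]; trivial
      have := hSper d hd 0
      rwa [zero_add] at this
    exact hHne (hall x₀)
  · -- cyclic period group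
    rw [← AddSubgroup.zmultiples_eq_closure] at ha
    have haS : a ∈ S := by rw [ha]; exact AddSubgroup.mem_zmultiples a
    have ha0 : a ≠ 0 := by
      rintro rfl
      obtain ⟨n, hn⟩ := AddSubgroup.mem_zmultiples_iff.mp (ha ▸ h1S)
      rw [smul_zero] at hn
      exact one_ne_zero hn.symm
    set τ : ℝ := |a| with hτdef
    have hτpos : 0 < τ := abs_pos.mpr ha0
    have hτS : τ ∈ S := by
      rcases abs_cases a with ⟨he, _⟩ | ⟨he, _⟩
      · rw [hτdef, he]; exact haS
      · rw [hτdef, he]; exact S.neg_mem haS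
    have hτper : ∀ x, H (x + τ) = H x := hSper τ hτS
    -- max of H on [0, τ]
    obtain ⟨p, hpmem, hpmax⟩ := isCompact_Icc.exists_isMaxOn
      (Set.nonempty_Icc.mpr (le_of_lt hτpos)) hHcont.continuousOn
    have hmax' : ∀ x ∈ Set.Icc p (p + τ), H x ≤ H p := by
      intro x hx
      rcases le_or_gt x τ with hle | hlt
      · exact hpmax ⟨le_trans hpmem.1 hx.1, hle⟩
      · have hmem : x - τ ∈ Set.Icc 0 τ := by
          constructor
          · linarith
          · have := hx.2; have := hpmem.2; linarith
        have : H (x - τ) ≤ H p := hpmax hmem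
        have hxe : H x = H (x - τ) := by
          have := hτper (x - τ)
          rw [sub_add_cancel] at this
          exact this
        rwa [hxe]
    -- min of H on [p, p + τ]
    obtain ⟨w, hwmem, hwmin⟩ := isCompact_Icc.exists_isMinOn
      (Set.nonempty_Icc.mpr (show p ≤ p + τ by linarith)) hHcont.continuousOn
    have hppτ : H (p + τ) = H p := hτper p
    have hwlt : H w < H p := by
      by_contra hge
      push_neg at hge
      have hflat : ∀ x ∈ Set.Icc p (p + τ), H x = H p := by
        intro x hx
        refine le_antisymm (hmax' x hx) ?_
        exact le_trans hge (hwmin hx)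
      have hall : ∀ x, H x = H p := by
        intro x
        set k : ℤ := ⌊(x - p) / τ⌋ with hk
        have h1 : 0 ≤ (x - p) - k * τ := Int.sub_floor_div_mul_nonneg (x - p) hτpos
        have h2 : (x - p) - k * τ < τ := Int.sub_floor_div_mul_lt (x - p) hτpos
        have hkS : (k : ℤ) • τ ∈ S := AddSubgroup.zsmul_mem S hτS k
        have hper := hSper _ hkS (x - k * τ)
        rw [zsmul_eq_mul, sub_add_cancel] at hper
        have hmem : x - k * τ ∈ Set.Icc p (p + τ) := by
          constructor
          · linarith
          · linarith
        rw [hper]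
        exact hflat _ hmem
      exact hHne (by rw [hall x₀, hall 0])
    -- w is an interior minimum
    have hwne1 : w ≠ p := by
      intro he; rw [he] at hwlt; exact lt_irrefl _ hwlt
    have hwne2 : w ≠ p + τ := by
      intro he; rw [he, hppτ] at hwlt; exact lt_irrefl _ hwlt
    have hwIoo : w ∈ Set.Ioo p (p + τ) :=
      ⟨lt_of_le_of_ne hwmem.1 (Ne.symm hwne1), lt_of_le_of_ne hwmem.2 hwne2⟩
    -- choose a good value y avoiding the image of the null set Fᶜ
    have hZ : volume (h '' Fᶜ) = 0 := aux_image_null hLip hFmeas.compl hFc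
    have hns : ¬ (Set.Ioo (H w) (H p) ⊆ h '' Fᶜ) := by
      intro hsub
      have hle : volume (Set.Ioo (H w) (H p)) ≤ volume (h '' Fᶜ) := measure_mono hsub
      rw [hZ] at hle
      have hz : volume (Set.Ioo (H w) (H p)) = 0 := le_antisymm hle zero_le
      rw [Real.volume_Ioo] at hz
      have hpos := ENNReal.ofReal_pos.mpr (sub_pos.mpr hwlt)
      rw [hz] at hpos
      exact lt_irrefl _ hpos
    obtain ⟨y, hyIoo, hyZ⟩ := Set.not_subset.mp hns
    have hIcc : y ∈ Set.Icc (H w) (H p) := ⟨le_of_lt hyIoo.1, le_of_lt hyIoo.2⟩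
    obtain ⟨t₁, ht₁mem, ht₁⟩ := intermediate_value_Icc' (le_of_lt hwIoo.1)
      hHcont.continuousOn hIcc
    have hIcc2 : y ∈ Set.Icc (H w) (H (p + τ)) := by rw [hppτ]; exact hIcc
    obtain ⟨t₂, ht₂mem, ht₂⟩ := intermediate_value_Icc (le_of_lt hwIoo.2)
      hHcont.continuousOn hIcc2
    have ht₁w : t₁ < w := by
      refine lt_of_le_of_ne ht₁mem.2 fun he => ?_
      rw [he] at ht₁
      rw [ht₁] at hyIoo
      exact lt_irrefl _ hyIoo.1
    have ht₂w : w < t₂ := by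
      refine lt_of_le_of_ne ht₂mem.1 fun he => ?_
      rw [← he] at ht₂
      rw [ht₂] at hyIoo
      exact lt_irrefl _ hyIoo.1
    have ht₂τ : t₂ < p + τ := by
      refine lt_of_le_of_ne ht₂mem.2 fun he => ?_
      rw [he, hppτ] at ht₂
      rw [ht₂] at hyIoo
      exact lt_irrefl _ hyIoo.2
    set d : ℝ := t₂ - t₁ with hd
    have hd0 : 0 < d := by rw [hd]; linarith
    have hdτ : d < τ := by
      have := ht₁mem.1
      rw [hd]; linarith
    -- the two preimage points lie in F
    have hmk₁ : ((t₁ : ℝ) : UnitAddCircle) ∈ F := by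
      by_contra hmem
      exact hyZ ⟨((t₁ : ℝ) : UnitAddCircle), hmem, ht₁⟩
    have hmk₂ : ((t₂ : ℝ) : UnitAddCircle) ∈ F := by
      by_contra hmem
      exact hyZ ⟨((t₂ : ℝ) : UnitAddCircle), hmem, ht₂⟩
    have heq : h ((t₁ : ℝ) : UnitAddCircle) = h ((t₂ : ℝ) : UnitAddCircle) := by
      show H t₁ = H t₂
      rw [ht₁, ht₂]
    have hper := hC _ _ hmk₁ hmk₂ heq
    have hdS : d ∈ S := by
      intro x
      have hx := hper ((x : ℝ) : UnitAddCircle)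
      have hsub : ((t₂ : ℝ) : UnitAddCircle) - ((t₁ : ℝ) : UnitAddCircle)
          = ((d : ℝ) : UnitAddCircle) := by
        rw [hd, AddCircle.coe_sub]
      rw [hsub] at hx
      show h ((x + d : ℝ) : UnitAddCircle) = h ((x : ℝ) : UnitAddCircle)
      rw [AddCircle.coe_add]
      exact hx
    rw [ha] at hdS
    obtain ⟨mz, hmz⟩ := AddSubgroup.mem_zmultiples_iff.mp hdS
    have hmz0 : mz ≠ 0 := by
      rintro rfl
      rw [zero_smul] at hmz
      exact (ne_of_gt hd0) hmz.symm
    have h1le : (1 : ℝ) ≤ |(mz : ℝ)| := by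
      have := Int.one_le_abs hmz0
      exact_mod_cast this
    have hτd : τ ≤ |d| := by
      rw [← hmz, zsmul_eq_mul, abs_mul]
      calc τ = 1 * |a| := (one_mul _).symm
      _ ≤ |(mz : ℝ)| * |a| := mul_le_mul_of_nonneg_right h1le (abs_nonneg a)
    rw [abs_of_pos hd0] at hτd
    linarith
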